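/- For every $x\in\mathbb{R}^N\setminus\{0\}$, every $z\in\mathbb{R}^k$ and every $\varepsilon>0$, the normalized Lebesgue measure of the set $\{(l_1,\dots,l_k)\in (B_N(0,1))^k : \|Lx+z\|\le\varepsilon\}$, where $Lx=(\langle l_1,x\rangle,\dots,\langle l_k,x\rangle)$, is at most $C\,\varepsilon^k/\|x\|^k$ for a constant $C>0$ depending only on $N$ and $k$. -/

import Mathlib

open MeasureTheory Metric Set

/-- The normalized `k`-fold product of the normalized Lebesgue measure on the closed
unit ball of `ℝ^N`, i.e. the natural probability measure on the parameter space
`E = (B_N(0,1))^k` of linear maps `L x = (⟪l 1, x⟫, …, ⟪l k, x⟫)`. -/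
noncomputable def LebE (N k : ℕ) : Measure (Fin k → EuclideanSpace ℝ (Fin N)) :=
  Measure.pi fun _ =>
    (volume (Metric.closedBall (0 : EuclideanSpace ℝ (Fin N)) 1))⁻¹ •
      volume.restrict (Metric.closedBall (0 : EuclideanSpace ℝ (Fin N)) 1)

lemma euclid_coord_le {n : ℕ} (v : EuclideanSpace ℝ (Fin n)) (i : Fin n) : |v i| ≤ ‖v‖ := by
  rw [EuclideanSpace.norm_eq]
  have h : |v i| = Real.sqrt (‖v i‖ ^ 2) := by
    rw [Real.sqrt_sq_eq_abs]; simp [Real.norm_eq_abs, abs_abs]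
  rw [h]
  exact Real.sqrt_le_sqrt (Finset.single_le_sum (f := fun m => ‖v m‖ ^ 2)
    (fun m _ => sq_nonneg _) (Finset.mem_univ i))

lemma slab_volume {N : ℕ} (x : EuclideanSpace ℝ (Fin N)) (j : Fin N)
    (hxj : x j ≠ 0) (a ε : ℝ) (hε : 0 < ε) :
    volume ({l : EuclideanSpace ℝ (Fin N) | |(inner ℝ l x : ℝ) + a| ≤ ε} ∩ closedBall 0 1)
      ≤ ENNReal.ofReal (2 ^ N * ε / |x j|) := by
  classical
  set u : Fin N → ℝ := Pi.single j 1 with hu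
  set v : Fin N → ℝ := fun m => x m - u m with hv
  set M : Matrix (Fin N) (Fin N) ℝ := 1 + Matrix.replicateCol Unit u * Matrix.replicateRow Unit v with hM
  have hdet : (Matrix.toLin' M).det = x j := by
    rw [LinearMap.det_toLin', hM, Matrix.det_one_add_replicateCol_mul_replicateRow]
    simp [hv, hu, dotProduct, Pi.single_apply, Finset.sum_ite_eq']
  have hmv : ∀ y : Fin N → ℝ, ∀ i, (Matrix.toLin' M) y i
      = y i + u i * (∑ m, v m * y m) := by
    intro y i
    simp [hM, Matrix.toLin'_apply, Matrix.mulVec, dotProduct, Matrix.add_apply,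
      Matrix.one_apply, Matrix.mul_apply, Finset.sum_ite_eq, add_mul, Finset.sum_add_distrib,
      Finset.mul_sum, mul_assoc]
  set box : Set (Fin N → ℝ) :=
    Set.pi univ (fun i => if i = j then Icc (-a - ε) (-a + ε) else Icc (-1 : ℝ) 1) with hbox
  have hboxm : MeasurableSet box := MeasurableSet.univ_pi fun i => by
    split <;> exact measurableSet_Icc
  have e := (MeasurableEquiv.toLp 2 (Fin N → ℝ)).symm
  -- inclusion
  have hincl : {l : EuclideanSpace ℝ (Fin N) | |(inner ℝ l x : ℝ) + a| ≤ ε} ∩ closedBall 0 1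
      ⊆ ((MeasurableEquiv.toLp 2 (Fin N → ℝ)).symm) ⁻¹' ((Matrix.toLin' M) ⁻¹' box) := by
    rintro l ⟨hl1', hl2⟩
    have hl1 : |(inner ℝ l x : ℝ) + a| ≤ ε := hl1'
    intro i _
    have hcoord : ∀ m, |l m| ≤ 1 := by
      intro m
      calc |l m| ≤ ‖l‖ := euclid_coord_le l m
        _ ≤ 1 := by simpa using mem_closedBall_zero_iff.mp hl2
    have happ : (Matrix.toLin' M) (((MeasurableEquiv.toLp 2 (Fin N → ℝ)).symm) l) i
        = l i + u i * (∑ m, v m * l m) := hmv _ i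
    have hsum : ∑ m, v m * l m = (inner ℝ l x : ℝ) - l j := by
      simp only [hv, hu, sub_mul, Finset.sum_sub_distrib]
      congr 1
      · simp [Pi.single_apply, Finset.sum_ite_eq', mul_ite]
    by_cases hij : i = j
    · subst hij
      simp only [happ, hu, Pi.single_eq_same, one_mul, hsum, if_pos rfl]
      constructor
      · have := (abs_le.mp hl1).1; linarith
      · have := (abs_le.mp hl1).2; linarith
    · simp only [happ, hu, Pi.single_eq_of_ne hij, zero_mul, add_zero, if_neg hij]
      exact abs_le.mp (hcoord i)
  have hdetne : (Matrix.toLin' M).det ≠ 0 := by rw [hdet]; exact hxj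
  calc volume ({l : EuclideanSpace ℝ (Fin N) | |(inner ℝ l x : ℝ) + a| ≤ ε} ∩ closedBall 0 1)
      ≤ volume (((MeasurableEquiv.toLp 2 (Fin N → ℝ)).symm) ⁻¹' ((Matrix.toLin' M) ⁻¹' box)) :=
        measure_mono hincl
    _ = volume ((Matrix.toLin' M) ⁻¹' box) :=
        (EuclideanSpace.volume_preserving_symm_measurableEquiv_toLp (Fin N)).measure_preimage
          (((Matrix.toLin' M).continuous_of_finiteDimensional.measurable hboxm).nullMeasurableSet)
    _ = ENNReal.ofReal |((Matrix.toLin' M).det)⁻¹| * volume box :=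
        Measure.addHaar_preimage_linearMap volume hdetne box
    _ ≤ ENNReal.ofReal (2 ^ N * ε / |x j|) := by
        rw [hdet, hbox, volume_pi_pi]
        rw [← Finset.mul_prod_erase Finset.univ _ (Finset.mem_univ j)]
        rw [if_pos rfl, Real.volume_Icc]
        have h2 : ∏ i ∈ Finset.univ.erase j,
            volume (if i = j then Icc (-a - ε) (-a + ε) else Icc (-1:ℝ) 1)
            = ENNReal.ofReal 2 ^ (N - 1) := by
          rw [Finset.prod_congr rfl (fun i hi => ?_), Finset.prod_const,
            Finset.card_erase_of_mem (Finset.mem_univ j), Finset.card_univ, Fintype.card_fin]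
          rw [if_neg (Finset.ne_of_mem_erase hi), Real.volume_Icc]
          norm_num
        rw [h2]
        have hsub : (-a + ε - (-a - ε)) = 2 * ε := by ring
        rw [hsub]
        have hN : 1 ≤ N := j.pos
        have habs : |x j| ≠ 0 := abs_ne_zero.2 hxj
        rw [← ENNReal.ofReal_pow (by norm_num), ← ENNReal.ofReal_mul (by positivity),
          ← ENNReal.ofReal_mul (by positivity)]
        apply ENNReal.ofReal_le_ofReal
        have hpow : (2:ℝ) ^ N = 2 * 2 ^ (N - 1) := by
          rw [← pow_succ', Nat.sub_add_cancel hN]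
        have heq : |(x j)⁻¹| * (2 * ε * 2 ^ (N - 1)) = 2 ^ N * ε / |x j| := by
          rw [abs_inv, hpow]; field_simp
        rw [heq]

/-- For every `x ≠ 0`, `z ∈ ℝ^k` and `ε > 0`, the normalized Lebesgue measure of
`{(l₁,…,l_k) ∈ (B_N(0,1))^k : ‖L x + z‖ ≤ ε}` is at most `C ε^k / ‖x‖^k`, where `C = C(N,k)`. -/
theorem measure_perturbation_small (N k : ℕ) :
    ∃ C > (0 : ℝ), ∀ x : EuclideanSpace ℝ (Fin N), x ≠ 0 →
      ∀ z : EuclideanSpace ℝ (Fin k), ∀ ε : ℝ, 0 < ε →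
        LebE N k {l | ‖(show EuclideanSpace ℝ (Fin k) from WithLp.toLp 2 fun i => (inner ℝ (l i) x : ℝ)) + z‖ ≤ ε}
          ≤ ENNReal.ofReal (C * ε ^ k / ‖x‖ ^ k) := by
  rcases Nat.eq_zero_or_pos N with hN0 | hN0
  · refine ⟨1, one_pos, fun x hx => ?_⟩
    subst hN0
    exact absurd (show x = 0 by ext i; exact i.elim0) hx
  set V := volume (closedBall (0 : EuclideanSpace ℝ (Fin N)) 1) with hV
  have hVpos : 0 < V := measure_closedBall_pos volume 0 one_pos
  have hVtop : V ≠ ⊤ := measure_closedBall_lt_top.ne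
  have htR : 0 < V.toReal := ENNReal.toReal_pos hVpos.ne' hVtop
  have hNsqrt : (0:ℝ) < Real.sqrt N := Real.sqrt_pos.2 (by exact_mod_cast hN0)
  set c : ℝ := (V.toReal)⁻¹ * 2 ^ N * Real.sqrt N with hc
  have hcpos : 0 < c := by positivity
  refine ⟨c ^ k, pow_pos hcpos k, fun x hx z ε hε => ?_⟩
  set μ0 : Measure (EuclideanSpace ℝ (Fin N)) := V⁻¹ • volume.restrict (closedBall 0 1) with hμ0
  haveI : IsFiniteMeasure μ0 := by
    constructor
    rw [hμ0, Measure.smul_apply, Measure.restrict_apply MeasurableSet.univ, univ_inter,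
      smul_eq_mul]
    exact ENNReal.mul_lt_top (ENNReal.inv_lt_top.mpr hVpos) hVtop.lt_top
  obtain ⟨j, -, hj⟩ := Finset.exists_max_image Finset.univ (fun i => |x i|)
    ⟨⟨0, hN0⟩, Finset.mem_univ _⟩
  have hxj : x j ≠ 0 := by
    intro h
    apply hx
    ext i
    have h1 := hj i (Finset.mem_univ i)
    simp only [h, abs_zero] at h1
    exact abs_nonpos_iff.mp h1
  have hxjabs : (0:ℝ) < |x j| := abs_pos.2 hxj
  have hxnorm : 0 < ‖x‖ := norm_pos_iff.mpr hx
  have hnorm : ‖x‖ ≤ Real.sqrt N * |x j| := by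
    rw [EuclideanSpace.norm_eq]
    have hle : ∑ i, ‖x i‖ ^ 2 ≤ (N : ℝ) * |x j| ^ 2 := by
      calc ∑ i, ‖x i‖ ^ 2 ≤ ∑ _i : Fin N, |x j| ^ 2 := Finset.sum_le_sum (fun i _ => by
            rw [Real.norm_eq_abs]
            exact pow_le_pow_left₀ (abs_nonneg _) (hj i (Finset.mem_univ i)) 2)
        _ = (N : ℝ) * |x j| ^ 2 := by
            rw [Finset.sum_const, Finset.card_univ, Fintype.card_fin, nsmul_eq_mul]
    calc Real.sqrt (∑ i, ‖x i‖ ^ 2) ≤ Real.sqrt ((N : ℝ) * |x j| ^ 2) := Real.sqrt_le_sqrt hle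
      _ = Real.sqrt N * |x j| := by
          rw [Real.sqrt_mul (Nat.cast_nonneg N), Real.sqrt_sq_eq_abs, abs_abs]
  have slabm : ∀ a : ℝ, μ0 {l : EuclideanSpace ℝ (Fin N) | |(inner ℝ l x : ℝ) + a| ≤ ε}
      ≤ ENNReal.ofReal (c * ε / ‖x‖) := by
    intro a
    have hmeas : MeasurableSet {l : EuclideanSpace ℝ (Fin N) | |(inner ℝ l x : ℝ) + a| ≤ ε} := by
      have hcont : Continuous fun l : EuclideanSpace ℝ (Fin N) => |(inner ℝ l x : ℝ) + a| :=
        ((continuous_id.inner continuous_const).add continuous_const).abs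
      exact measurableSet_le hcont.measurable measurable_const
    rw [hμ0, Measure.smul_apply, Measure.restrict_apply hmeas, smul_eq_mul]
    have hVinv : V⁻¹ = ENNReal.ofReal (V.toReal)⁻¹ := by
      rw [ENNReal.ofReal_inv_of_pos htR, ENNReal.ofReal_toReal hVtop]
    calc V⁻¹ * volume ({l : EuclideanSpace ℝ (Fin N) | |(inner ℝ l x : ℝ) + a| ≤ ε}
          ∩ closedBall 0 1)
        ≤ V⁻¹ * ENNReal.ofReal (2 ^ N * ε / |x j|) :=
          mul_le_mul_right (slab_volume x j hxj a ε hε) _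
      _ ≤ ENNReal.ofReal (c * ε / ‖x‖) := by
          rw [hVinv, ← ENNReal.ofReal_mul (by positivity)]
          apply ENNReal.ofReal_le_ofReal
          rw [hc, show (V.toReal)⁻¹ * ((2:ℝ) ^ N * ε / |x j|)
            = ((V.toReal)⁻¹ * 2 ^ N * ε) / |x j| from by ring,
            div_le_div_iff₀ hxjabs hxnorm]
          have hmul := mul_le_mul_of_nonneg_left hnorm
            (le_of_lt (by positivity : (0:ℝ) < (V.toReal)⁻¹ * 2 ^ N * ε))
          nlinarith
  have hsub : {l : Fin k → EuclideanSpace ℝ (Fin N) |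
      ‖(show EuclideanSpace ℝ (Fin k) from WithLp.toLp 2 fun i => (inner ℝ (l i) x : ℝ)) + z‖ ≤ ε}
      ⊆ Set.pi univ
        (fun i => {l : EuclideanSpace ℝ (Fin N) | |(inner ℝ l x : ℝ) + z i| ≤ ε}) := by
    intro l hl i _
    have h1 := euclid_coord_le
      ((show EuclideanSpace ℝ (Fin k) from WithLp.toLp 2 fun i => (inner ℝ (l i) x : ℝ)) + z) i
    exact le_trans h1 hl
  calc LebE N k {l | ‖(show EuclideanSpace ℝ (Fin k)
          from WithLp.toLp 2 fun i => (inner ℝ (l i) x : ℝ)) + z‖ ≤ ε}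
      ≤ LebE N k (Set.pi univ
        (fun i => {l : EuclideanSpace ℝ (Fin N) | |(inner ℝ l x : ℝ) + z i| ≤ ε})) :=
        measure_mono hsub
    _ = ∏ i : Fin k, μ0 {l : EuclideanSpace ℝ (Fin N) | |(inner ℝ l x : ℝ) + z i| ≤ ε} :=
        Measure.pi_pi _ _
    _ ≤ ∏ _i : Fin k, ENNReal.ofReal (c * ε / ‖x‖) :=
        Finset.prod_le_prod' (fun i _ => slabm (z i))
    _ ≤ ENNReal.ofReal (c ^ k * ε ^ k / ‖x‖ ^ k) := by
        rw [Finset.prod_const, Finset.card_univ, Fintype.card_fin,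
          ← ENNReal.ofReal_pow (by positivity), div_pow, mul_pow]
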